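/- Let L = {l_1,…,l_s} be a finite set of s non-negative integers and K = {k_1,…,k_r} a set of r positive integers with r ≤ s and k_i > s − r for every 1 ≤ i ≤ r. Then for every finite simple graph G that admits an L-intersection representation in which the size of every assigned set lies in K, mr(G^c) ≤ r · Σ_{t=s−r+1}^{s} C(Θ_{L,K}(G), t), where mr denotes the minimum rank over the real numbers. -/

import Mathlib

/-- An `L`-intersection representation of `G` with universe `Fin l`: two distinct vertices are
adjacent iff the size of the intersection of their assigned sets lies in `L`. -/
def IsLRep {V : Type*} {l : ℕ} (G : SimpleGraph V) (L : Set ℕ) (A : V → Finset (Fin l)) : Prop :=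
  ∀ u v : V, u ≠ v → (G.Adj u v ↔ (A u ∩ A v).card ∈ L)

/-- `G` has an `L`-intersection representation on a universe of size `l`. -/
def HasLRep {V : Type*} (G : SimpleGraph V) (L : Set ℕ) (l : ℕ) : Prop :=
  ∃ A : V → Finset (Fin l), IsLRep G L A

/-- The `L`-intersection number `Θ_L(G)`. -/
noncomputable def thetaL {V : Type*} (G : SimpleGraph V) (L : Set ℕ) : ℕ :=
  sInf {l | HasLRep G L l}

/-- The minimum rank of a graph `G` over a field `F`: the minimum rank of a symmetric matrix
over `F` whose off-diagonal entries are nonzero exactly at the edges of `G`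
(diagonal entries are arbitrary). -/
noncomputable def minRank (F : Type*) [Field F] {V : Type*} [Fintype V] (G : SimpleGraph V) : ℕ :=
  sInf {r | ∃ A : Matrix V V F, A.IsSymm ∧
    (∀ u v : V, u ≠ v → (A u v ≠ 0 ↔ G.Adj u v)) ∧ A.rank = r}

/-- `G` has an `L`-intersection representation with `l` labels in which the size of every
assigned set lies in `K`. -/
def HasKLRep {V : Type*} (G : SimpleGraph V) (L : Set ℕ) (K : Finset ℕ) (l : ℕ) : Prop :=
  ∃ A : V → Finset (Fin l), (∀ v, (A v).card ∈ K) ∧ IsLRep G L A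

/-- The `(L,K)`-intersection number `Θ_{L,K}(G)`: the least universe size of an
`L`-intersection representation of `G` with all set sizes in `K`. -/
noncomputable def thetaLK {V : Type*} (G : SimpleGraph V) (L : Set ℕ) (K : Finset ℕ) : ℕ :=
  sInf {l | HasKLRep G L K l}



open Finset

lemma real_choose_succ (n u : ℕ) :
    ((u:ℝ)+1) * (n.choose (u+1) : ℝ) = ((n:ℝ) - u) * (n.choose u : ℝ) := by
  rcases le_or_gt (u+1) n with h | h
  · have hu : u ≤ n := Nat.le_of_succ_le h
    have h2 : ((n.choose (u+1) : ℝ)) * ((u:ℝ)+1) = (n.choose u : ℝ) * ((n:ℝ) - (u:ℝ)) := by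
      rw [← Nat.cast_sub hu]
      exact_mod_cast congrArg (Nat.cast (R := ℝ)) (Nat.choose_succ_right_eq n u)
    linarith
  · rcases Nat.lt_or_ge n u with h' | h'
    · rw [Nat.choose_eq_zero_of_lt h', Nat.choose_eq_zero_of_lt (Nat.lt_succ_of_lt h')]
      simp
    · have hnu : n = u := le_antisymm (Nat.lt_succ_iff.mp h) h'
      subst hnu
      rw [Nat.choose_eq_zero_of_lt (Nat.lt_succ_self n)]
      simp

lemma newton_exists (L : Finset ℕ) :
    ∃ a : ℕ → ℝ, ∀ n : ℕ, ∏ l ∈ L, ((n:ℝ) - (l:ℝ)) =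
      ∑ t ∈ Finset.range (L.card + 1), a t * (n.choose t : ℝ) := by
  classical
  induction L using Finset.induction with
  | empty => exact ⟨fun _ => 1, fun n => by simp⟩
  | @insert l L' hl ih =>
    obtain ⟨a, ha⟩ := ih
    set c := L'.card with hc
    set a' : ℕ → ℝ := fun t => if t ≤ c then a t else 0 with ha'
    have ha'eq : ∀ n : ℕ, ∏ x ∈ L', ((n:ℝ) - (x:ℝ)) =
        ∑ t ∈ Finset.range (c + 1), a' t * (n.choose t : ℝ) := by
      intro n
      rw [ha n]
      refine Finset.sum_congr rfl fun t ht => ?_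
      have htc : t ≤ c := Nat.lt_succ_iff.mp (Finset.mem_range.mp ht)
      simp [ha', htc]
    refine ⟨fun t => a' (t-1) * t + a' t * ((t:ℝ) - (l:ℝ)), fun n => ?_⟩
    rw [Finset.prod_insert hl, Finset.card_insert_of_notMem hl, ha'eq n, ← hc]
    have hzero : a' (c+1) = 0 := by simp [ha']
    have key : ∀ i : ℕ, a' i * (((i:ℝ)+1) * (n.choose (i+1) : ℝ)) + a' i * ((i:ℝ)-(l:ℝ)) * (n.choose i:ℝ)
        = ((n:ℝ)-(l:ℝ)) * (a' i * (n.choose i:ℝ)) := by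
      intro i
      rw [real_choose_succ n i]
      ring
    calc ((n:ℝ)-(l:ℝ)) * ∑ t ∈ Finset.range (c+1), a' t * (n.choose t : ℝ)
        = ∑ i ∈ Finset.range (c+1),
            (a' i * (((i:ℝ)+1) * (n.choose (i+1) : ℝ)) + a' i * ((i:ℝ)-(l:ℝ)) * (n.choose i:ℝ)) := by
          rw [Finset.mul_sum]
          exact Finset.sum_congr rfl fun i _ => (key i).symm
      _ = (∑ i ∈ Finset.range (c+1), a' i * (((i:ℝ)+1) * (n.choose (i+1) : ℝ)))
          + ∑ i ∈ Finset.range (c+1), a' i * ((i:ℝ)-(l:ℝ)) * (n.choose i:ℝ) := by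
          rw [Finset.sum_add_distrib]
      _ = (∑ t ∈ Finset.range (c+1+1), a' (t-1) * (t:ℝ) * (n.choose t : ℝ))
          + ∑ t ∈ Finset.range (c+1+1), a' t * ((t:ℝ)-(l:ℝ)) * (n.choose t:ℝ) := by
          rw [Finset.sum_range_succ' (fun t => a' (t-1) * (t:ℝ) * (n.choose t : ℝ)) (c+1)]
          rw [Finset.sum_range_succ (fun t => a' t * ((t:ℝ)-(l:ℝ)) * (n.choose t:ℝ)) (c+1)]
          rw [hzero]
          simp only [Nat.add_sub_cancel, Nat.cast_zero, Nat.cast_add, Nat.cast_one, zero_mul,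
            mul_zero, add_zero, Nat.choose_zero_right, Nat.cast_one]
          congr 1
          · refine Finset.sum_congr rfl fun i _ => by ring
      _ = ∑ t ∈ Finset.range (c+1+1),
            (a' (t-1) * (t:ℝ) + a' t * ((t:ℝ) - (l:ℝ))) * (n.choose t : ℝ) := by
          rw [← Finset.sum_add_distrib]
          exact Finset.sum_congr rfl fun t _ => by ring

lemma filter_subset_powersetCard {α : Type*} [DecidableEq α] [Fintype α] (X : Finset α) (t : ℕ) :
    (Finset.powersetCard t (Finset.univ : Finset α)).filter (fun S => S ⊆ X)
      = Finset.powersetCard t X := by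
  ext S
  simp only [Finset.mem_filter, Finset.mem_powersetCard, Finset.subset_univ, true_and]
  tauto

lemma card_filter_superset {α : Type*} [DecidableEq α] (Y T : Finset α) (q : ℕ)
    (hT : T ⊆ Y) (hq : T.card ≤ q) :
    ((Finset.powersetCard q Y).filter (fun S => T ⊆ S)).card
      = (Y.card - T.card).choose (q - T.card) := by
  have : ((Finset.powersetCard q Y).filter (fun S => T ⊆ S)).card
      = (Finset.powersetCard (q - T.card) (Y \ T)).card := by
    refine Finset.card_bij' (fun S _ => S \ T) (fun U _ => U ∪ T) ?_ ?_ ?_ ?_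
    · intro S hS
      simp only [Finset.mem_filter, Finset.mem_powersetCard] at hS
      obtain ⟨⟨hSY, hScard⟩, hTS⟩ := hS
      simp only [Finset.mem_powersetCard]
      constructor
      · exact Finset.sdiff_subset_sdiff hSY (le_refl T)
      · rw [Finset.card_sdiff_of_subset hTS, hScard]
    · intro U hU
      simp only [Finset.mem_powersetCard] at hU
      obtain ⟨hUY, hUcard⟩ := hU
      have hUT : Disjoint U T := by
        refine Finset.disjoint_left.mpr fun a haU haT => ?_
        exact (Finset.mem_sdiff.mp (hUY haU)).2 haT
      simp only [Finset.mem_filter, Finset.mem_powersetCard]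
      refine ⟨⟨?_, ?_⟩, Finset.subset_union_right⟩
      · exact Finset.union_subset ((hUY.trans (Finset.sdiff_subset))) hT
      · rw [Finset.card_union_of_disjoint hUT, hUcard]
        omega
    · intro S hS
      simp only [Finset.mem_filter] at hS
      exact Finset.sdiff_union_of_subset hS.2
    · intro U hU
      simp only [Finset.mem_powersetCard] at hU
      have hUT : Disjoint U T := by
        refine Finset.disjoint_left.mpr fun a haU haT => ?_
        exact (Finset.mem_sdiff.mp (hU.1 haU)).2 haT
      rw [Finset.union_sdiff_right, Finset.sdiff_eq_self_of_disjoint hUT]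
  rw [this, Finset.card_powersetCard, Finset.card_sdiff_of_subset hT]

lemma sum_choose_inter {α : Type*} [DecidableEq α] (X Y : Finset α) (t q : ℕ) (htq : t ≤ q) :
    ∑ S ∈ Finset.powersetCard q Y, ((X ∩ S).card).choose t
      = (X ∩ Y).card.choose t * ((Y.card - t).choose (q - t)) := by
  have step1 : ∀ S ∈ Finset.powersetCard q Y,
      ((X ∩ S).card).choose t
        = ∑ T ∈ Finset.powersetCard t (X ∩ Y), (if T ⊆ S then 1 else 0) := by
    intro S hS
    rw [Finset.mem_powersetCard] at hS
    rw [← Finset.card_powersetCard]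
    have : Finset.powersetCard t (X ∩ S)
        = (Finset.powersetCard t (X ∩ Y)).filter (fun T => T ⊆ S) := by
      ext T
      simp only [Finset.mem_powersetCard, Finset.mem_filter, Finset.subset_inter_iff]
      constructor
      · rintro ⟨⟨hTX, hTS⟩, hc⟩
        exact ⟨⟨⟨hTX, hTS.trans hS.1⟩, hc⟩, hTS⟩
      · rintro ⟨⟨⟨hTX, _⟩, hc⟩, hTS⟩
        exact ⟨⟨hTX, hTS⟩, hc⟩
    rw [this, Finset.card_filter]
  rw [Finset.sum_congr rfl step1, Finset.sum_comm]
  have step2 : ∀ T ∈ Finset.powersetCard t (X ∩ Y),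
      (∑ S ∈ Finset.powersetCard q Y, if T ⊆ S then 1 else 0)
        = (Y.card - t).choose (q - t) := by
    intro T hT
    rw [Finset.mem_powersetCard] at hT
    rw [← Finset.card_filter]
    rw [card_filter_superset Y T q (hT.1.trans (Finset.inter_subset_right)) (hT.2 ▸ htq), hT.2]
  rw [Finset.sum_congr rfl step2]
  simp [Finset.card_powersetCard, mul_comm]

/-- Let `L = {l₁,…,l_s}` be a set of `s` non-negative integers and
`K = {k₁,…,k_r}` a set of `r` positive integers with `r ≤ s` and `kᵢ > s − r` for all `i`.
Then every finite simple graph `G` admitting an `L`-intersection representation with all set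
sizes in `K` satisfies `mr(Gᶜ) ≤ r · Σ_{t=s−r+1}^{s} C(Θ_{L,K}(G), t)` over the reals. -/
theorem minRank_compl_le_mul_sum_choose {V : Type*} [Fintype V]
    (L K : Finset ℕ) (s r : ℕ) (hL : L.card = s) (hK : K.card = r) (hrs : r ≤ s)
    (hKpos : ∀ k ∈ K, 0 < k) (hKlarge : ∀ k ∈ K, s - r < k)
    (G : SimpleGraph V) (hrep : ∃ l, HasKLRep G (↑L : Set ℕ) K l) :
    minRank ℝ Gᶜ ≤
      r * ∑ t ∈ Finset.Icc (s - r + 1) s, (thetaLK G (↑L : Set ℕ) K).choose t := by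
  classical
  by_cases hV : IsEmpty V
  · have h0 : (0:ℕ) ∈ {ρ | ∃ M : Matrix V V ℝ, M.IsSymm ∧
        (∀ u v : V, u ≠ v → (M u v ≠ 0 ↔ Gᶜ.Adj u v)) ∧ M.rank = ρ} := by
      refine ⟨0, by simp [Matrix.IsSymm], fun u v _ => (hV.elim u), ?_⟩
      simp [Matrix.rank_zero]
    exact le_trans (Nat.sInf_le h0) (Nat.zero_le _)
  haveI : Nonempty V := not_isEmpty_iff.mp hV
  set θ := thetaLK G (↑L : Set ℕ) K with hθ
  obtain ⟨A, hcard, hA⟩ : HasKLRep G (↑L : Set ℕ) K θ := Nat.sInf_mem hrep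
  obtain ⟨v0⟩ := ‹Nonempty V›
  have hr1 : 1 ≤ r := by
    rw [← hK]
    exact Finset.card_pos.mpr ⟨(A v0).card, hcard v0⟩
  set m := s - r with hm
  have hmK : ∀ k ∈ K, m + 1 ≤ k := fun k hk => Nat.succ_le_of_lt (hKlarge k hk)
  have hms : m + 1 ≤ s := by omega
  obtain ⟨a, haL⟩ := newton_exists L
  rw [hL] at haL
  -- the index set
  set 𝒮 : Finset (Finset (Fin θ)) :=
    (Finset.Icc (m+1) s).biUnion (fun t => Finset.powersetCard t Finset.univ) with h𝒮
  have hdisj : (↑(Finset.Icc (m+1) s) : Set ℕ).PairwiseDisjoint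
      (fun t => Finset.powersetCard t (Finset.univ : Finset (Fin θ))) := by
    intro t1 _ t2 _ hne
    refine Finset.disjoint_left.mpr fun S h1 h2 => hne ?_
    rw [Finset.mem_powersetCard] at h1 h2
    omega
  -- the matrices
  set Bf : V → Finset (Fin θ) × ℕ → ℝ := fun u p =>
    a p.1.card * (if p.1 ⊆ A u then 1 else 0) +
      (if p.1.card = m + 1 then
        ∑ t ∈ Finset.range (m+1),
          a t * ((A u ∩ p.1).card.choose t : ℝ) / (((p.2 - t).choose (m+1-t) : ℕ) : ℝ)
       else 0) with hBf
  set Cf : Finset (Fin θ) × ℕ → V → ℝ :=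
    fun p v => if p.1 ⊆ A v ∧ (A v).card = p.2 then 1 else 0 with hCf
  set B : Matrix V ↥(𝒮 ×ˢ K) ℝ := fun u p => Bf u p.1 with hB
  set Cm : Matrix ↥(𝒮 ×ˢ K) V ℝ := fun p v => Cf p.1 v with hCm
  -- the key computation
  have hM : ∀ u v : V, (B * Cm) u v = ∏ l ∈ L, (((A u ∩ A v).card : ℝ) - (l:ℝ)) := by
    intro u v
    set z := (A u ∩ A v).card with hz
    set κ := (A v).card with hκ
    have hκK : κ ∈ K := hcard v
    have hκm : m + 1 ≤ κ := hmK κ hκK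
    have e1 : (B * Cm) u v = ∑ p ∈ 𝒮 ×ˢ K, Bf u p * Cf p v := by
      rw [Matrix.mul_apply]
      exact Finset.sum_coe_sort (𝒮 ×ˢ K) (fun q => Bf u q * Cf q v)
    rw [e1, Finset.sum_product]
    have e2 : ∀ S ∈ 𝒮, ∑ k ∈ K, Bf u (S, k) * Cf (S, k) v
        = Bf u (S, κ) * (if S ⊆ A v then 1 else 0) := by
      intro S _
      rw [Finset.sum_eq_single κ]
      · congr 1
        simp [hCf, ← hκ]
      · intro k _ hne
        have : Cf (S, k) v = 0 := by
          simp only [hCf]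
          rw [if_neg]
          rintro ⟨-, h2⟩
          exact hne (h2 ▸ rfl)
        rw [this, mul_zero]
      · intro hn
        exact absurd hκK hn
    rw [Finset.sum_congr rfl e2]
    -- split into the two parts of Bf
    have e3 : ∀ S : Finset (Fin θ),
        Bf u (S, κ) * (if S ⊆ A v then 1 else 0)
          = a S.card * (if S ⊆ A u then 1 else 0) * (if S ⊆ A v then 1 else 0)
            + (if S.card = m + 1 then
                ∑ t ∈ Finset.range (m+1),
                  a t * ((A u ∩ S).card.choose t : ℝ) / (((κ - t).choose (m+1-t) : ℕ) : ℝ)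
               else 0) * (if S ⊆ A v then 1 else 0) := by
      intro S
      simp only [hBf]
      ring
    rw [Finset.sum_congr rfl (fun S _ => e3 S), Finset.sum_add_distrib]
    rw [h𝒮, Finset.sum_biUnion hdisj, Finset.sum_biUnion hdisj]
    -- part 1
    have part1 : ∑ t' ∈ Finset.Icc (m+1) s, ∑ S ∈ Finset.powersetCard t' Finset.univ,
        a S.card * (if S ⊆ A u then 1 else 0) * (if S ⊆ A v then 1 else 0)
        = ∑ t' ∈ Finset.Icc (m+1) s, a t' * (z.choose t' : ℝ) := by
      refine Finset.sum_congr rfl fun t' _ => ?_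
      have e4 : ∀ S ∈ Finset.powersetCard t' (Finset.univ : Finset (Fin θ)),
          a S.card * (if S ⊆ A u then 1 else 0) * (if S ⊆ A v then 1 else 0)
            = if S ⊆ A u ∩ A v then a t' else 0 := by
        intro S hS
        rw [(Finset.mem_powersetCard.mp hS).2]
        by_cases h1 : S ⊆ A u <;> by_cases h2 : S ⊆ A v <;>
          simp [h1, h2, Finset.subset_inter_iff]
      rw [Finset.sum_congr rfl e4, ← Finset.sum_filter,
        filter_subset_powersetCard (A u ∩ A v) t', Finset.sum_const,
        Finset.card_powersetCard, nsmul_eq_mul, mul_comm]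
    -- part 2
    have part2 : ∑ t' ∈ Finset.Icc (m+1) s, ∑ S ∈ Finset.powersetCard t' Finset.univ,
        (if S.card = m + 1 then
            ∑ t ∈ Finset.range (m+1),
              a t * ((A u ∩ S).card.choose t : ℝ) / (((κ - t).choose (m+1-t) : ℕ) : ℝ)
          else 0) * (if S ⊆ A v then 1 else 0)
        = ∑ t ∈ Finset.range (m+1), a t * (z.choose t : ℝ) := by
      rw [Finset.sum_eq_single (m+1)]
      · -- the t' = m+1 term
        have e5 : ∀ S ∈ Finset.powersetCard (m+1) (Finset.univ : Finset (Fin θ)),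
            (if S.card = m + 1 then
                ∑ t ∈ Finset.range (m+1),
                  a t * ((A u ∩ S).card.choose t : ℝ) / (((κ - t).choose (m+1-t) : ℕ) : ℝ)
              else 0) * (if S ⊆ A v then 1 else 0)
            = if S ⊆ A v then (∑ t ∈ Finset.range (m+1),
                  a t * ((A u ∩ S).card.choose t : ℝ) / (((κ - t).choose (m+1-t) : ℕ) : ℝ)) else 0 := by
          intro S hS
          rw [if_pos (Finset.mem_powersetCard.mp hS).2]
          by_cases h2 : S ⊆ A v <;> simp [h2]
        rw [Finset.sum_congr rfl e5, ← Finset.sum_filter,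
          filter_subset_powersetCard (A v) (m+1)]
        rw [Finset.sum_comm]
        refine Finset.sum_congr rfl fun t ht => ?_
        have htm : t ≤ m := Nat.lt_succ_iff.mp (Finset.mem_range.mp ht)
        have hD : (((κ - t).choose (m+1-t) : ℕ) : ℝ) ≠ 0 := by
          have : 0 < (κ - t).choose (m+1-t) :=
            Nat.choose_pos (by omega)
          exact_mod_cast this.ne'
        have e6 : ∑ S ∈ Finset.powersetCard (m+1) (A v),
            a t * ((A u ∩ S).card.choose t : ℝ) / (((κ - t).choose (m+1-t) : ℕ) : ℝ)
            = (a t / (((κ - t).choose (m+1-t) : ℕ) : ℝ)) *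
                ((∑ S ∈ Finset.powersetCard (m+1) (A v), ((A u ∩ S).card.choose t : ℕ) : ℕ) : ℝ) := by
          rw [Nat.cast_sum, Finset.mul_sum]
          exact Finset.sum_congr rfl fun S _ => by ring
        rw [e6, sum_choose_inter (A u) (A v) t (m+1) (by omega)]
        push_cast
        rw [← hz, ← hκ]
        field_simp
      · -- other t' give zero
        intro t' ht' hne
        refine Finset.sum_eq_zero fun S hS => ?_
        have : S.card = t' := (Finset.mem_powersetCard.mp hS).2
        rw [if_neg (by omega), zero_mul]
      · intro hn
        exact absurd (Finset.mem_Icc.mpr ⟨le_refl _, hms⟩) hn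
    rw [part1, part2, haL z, Finset.range_eq_Ico, Finset.range_eq_Ico, ← Finset.Ico_add_one_right_eq_Icc (m+1) s, add_comm]
    exact Finset.sum_Ico_consecutive (fun t => a t * (z.choose t : ℝ))
      (Nat.zero_le (m+1)) (by omega : m+1 ≤ s+1)
  -- symmetry
  have hsymm : (B * Cm).IsSymm := by
    rw [Matrix.IsSymm]
    ext u v
    rw [Matrix.transpose_apply, hM, hM, Finset.inter_comm]
  -- pattern
  have hpat : ∀ u v : V, u ≠ v → ((B * Cm) u v ≠ 0 ↔ Gᶜ.Adj u v) := by
    intro u v huv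
    rw [hM, SimpleGraph.compl_adj]
    rw [Finset.prod_ne_zero_iff]
    constructor
    · intro h
      refine ⟨huv, fun hadj => ?_⟩
      have hmem : (A u ∩ A v).card ∈ L := (hA u v huv).mp hadj
      have := h _ hmem
      simp at this
    · rintro ⟨-, hnadj⟩ l hl hzero
      have hcast : ((A u ∩ A v).card : ℝ) = (l:ℝ) := by linarith [sub_eq_zero.mp hzero]
      have : (A u ∩ A v).card = l := Nat.cast_injective hcast
      exact hnadj ((hA u v huv).mpr (this ▸ hl))
  -- rank bound
  have hrank : (B * Cm).rank ≤ r * ∑ t ∈ Finset.Icc (m+1) s, θ.choose t := by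
    calc (B * Cm).rank ≤ B.rank := Matrix.rank_mul_le_left B Cm
      _ ≤ Fintype.card ↥(𝒮 ×ˢ K) := Matrix.rank_le_card_width B
      _ = (𝒮 ×ˢ K).card := Fintype.card_coe _
      _ = 𝒮.card * K.card := Finset.card_product _ _
      _ = (∑ t ∈ Finset.Icc (m+1) s, θ.choose t) * r := by
          rw [hK]
          congr 1
          rw [h𝒮, Finset.card_biUnion (fun t1 h1 t2 h2 hne => hdisj h1 h2 hne)]
          refine Finset.sum_congr rfl fun t _ => ?_
          rw [Finset.card_powersetCard, Finset.card_univ, Fintype.card_fin]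
      _ = r * ∑ t ∈ Finset.Icc (m+1) s, θ.choose t := mul_comm _ _
  refine le_trans (Nat.sInf_le ⟨B * Cm, hsymm, hpat, rfl⟩) hrank
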